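/- There exists no lightlike hypersurface (M,g), tangent to the structure vector field ζ, of an indefinite Sasakian manifold (M̄, φ̄, ζ, η, ḡ), whose second fundamental form h is parallel, i.e. such that (∇_X h)(Y,Z) := ∇^t_X h(Y,Z) − h(∇_X Y, Z) − h(Y, ∇_X Z) = 0 for all X, Y, Z tangent to M. -/

import Mathlib

/-- An algebraic model, at the level of (local) smooth functions and vector fields, of a
lightlike hypersurface `(M,g)`, tangent to the structure vector field `ζ`, of an
indefinite Sasakian manifold `(M̄, φ̄, ζ, η, ḡ)`, together with a chosen screen
distribution `S(TM)` (containing `ζ`, `φ̄ ξ` and `φ̄ N`), a (local) section `ξ` of the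
rank-one normal bundle `TM⊥ ⊆ TM`, the associated null transversal section `N`, and all
the induced objects of the Gauss–Weingarten equations.

* `F` models the commutative `ℝ`-algebra of smooth functions on (an open subset of) `M`;
* `E` models the `F`-module of sections of the ambient tangent bundle `TM̄` restricted to `M`;
* `η(X)` is encoded throughout as `ḡ(X,ζ)`, `u(X)` as `g(X,V)`, `v(X)` as `g(X,U)` and
  `θ(X)` as `ḡ(X,N)`. -/
structure SasakiLightlikeHypersurface (F : Type) [CommRing F] [Algebra ℝ F]
    (E : Type) [AddCommGroup E] [Module F E] where
  /-- the submodule of vector fields tangent to the hypersurface `M` -/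
  TM : Submodule F E
  /-- the ambient metric `ḡ` (whose restriction to `TM` is the degenerate induced metric `g`) -/
  gbar : E →ₗ[F] E →ₗ[F] F
  gbar_symm : ∀ X Y : E, gbar X Y = gbar Y X
  /-- the directional derivative `X ⬝ f` of functions along tangent vector fields -/
  D : TM → Derivation ℝ F F
  D_add : ∀ X Y : TM, D (X + Y) = D X + D Y
  D_smul : ∀ (f : F) (X : TM) (k : F), D (f • X) k = f * D X k
  /-- the Lie bracket of vector fields tangent to `M` -/
  bracket : TM → TM → TM
  D_bracket : ∀ (X Y : TM) (f : F), D (bracket X Y) f = D X (D Y f) - D Y (D X f)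
  /-- the ambient Levi-Civita connection `∇̄`, in directions tangent to `M` -/
  nablaBar : TM → E → E
  nablaBar_add : ∀ (X Y : TM) (Z : E), nablaBar (X + Y) Z = nablaBar X Z + nablaBar Y Z
  nablaBar_smul : ∀ (f : F) (X : TM) (Z : E), nablaBar (f • X) Z = f • nablaBar X Z
  nablaBar_add' : ∀ (X : TM) (Y Z : E), nablaBar X (Y + Z) = nablaBar X Y + nablaBar X Z
  nablaBar_leibniz : ∀ (X : TM) (f : F) (Y : E),
    nablaBar X (f • Y) = D X f • Y + f • nablaBar X Y
  nablaBar_metric : ∀ (X : TM) (Y Z : E),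
    D X (gbar Y Z) = gbar (nablaBar X Y) Z + gbar Y (nablaBar X Z)
  nablaBar_torsion_free : ∀ X Y : TM,
    nablaBar X (Y : E) - nablaBar Y (X : E) = (bracket X Y : E)
  /-- a (local) section `ξ` of the rank-one lightlike normal bundle `TM⊥ ⊆ TM` -/
  xi : TM
  xi_normal : ∀ Y : TM, gbar (xi : E) (Y : E) = 0
  xi_spans : ∀ X : TM, (∀ Y : TM, gbar (X : E) (Y : E) = 0) →
    ∃ f : F, (X : E) = f • (xi : E)
  /-- the screen distribution `S(TM)`, a nondegenerate complement of `TM⊥` in `TM` -/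
  S : Submodule F E
  S_le : S ≤ TM
  S_compl : ∀ X : TM, ∃ W ∈ S, ∃ f : F, (X : E) = W + f • (xi : E)
  S_nondeg : ∀ W ∈ S, (∀ Z ∈ S, gbar W Z = 0) → W = 0
  /-- the null transversal section `N`, with `ḡ(ξ,N) = 1`, `ḡ(N,N) = 0`, `ḡ(N, S(TM)) = 0` -/
  Nt : E
  gbar_xi_Nt : gbar (xi : E) Nt = 1
  gbar_Nt_Nt : gbar Nt Nt = 0
  gbar_Nt_S : ∀ Z ∈ S, gbar Nt Z = 0
  /-- the induced connection `∇` on `M` -/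
  nabla : TM → TM → TM
  /-- the local second fundamental form `B` of `M` (the second fundamental form being
  `h(X,Y) = B(X,Y) N`) -/
  B : TM → TM → F
  /-- Gauss equation: `∇̄_X Y = ∇_X Y + B(X,Y) N` -/
  gauss : ∀ X Y : TM, nablaBar X (Y : E) = (nabla X Y : E) + B X Y • Nt
  /-- the shape operator `A_N` of `M` -/
  AN : TM → TM
  /-- the transversal `1`-form `τ`, so that the transversal connection is `∇ᵗ_X N = τ(X) N` -/
  tau : TM → F
  /-- Weingarten equation: `∇̄_X N = −A_N X + τ(X) N` -/
  weingarten : ∀ X : TM, nablaBar X Nt = -(AN X : E) + tau X • Nt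
  /-- the screen shape operator `A*_ξ` -/
  Astar : TM → TM
  /-- `∇_X ξ = −A*_ξ X − τ(X) ξ` -/
  weingarten_screen : ∀ X : TM, nablaBar X (xi : E) = -(Astar X : E) - tau X • (xi : E)
  /-- the projection `P` of `TM` onto `S(TM)`: `X = PX + θ(X) ξ`, `θ(X) = ḡ(X,N)` -/
  P : TM → TM
  P_mem : ∀ X : TM, (P X : E) ∈ S
  P_spec : ∀ X : TM, (X : E) = (P X : E) + gbar (X : E) Nt • (xi : E)
  /-- the induced connection `∇*` on the screen distribution -/
  nablaStar : TM → TM → TM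
  /-- the local second fundamental form `C` of the screen distribution -/
  C : TM → TM → F
  nablaStar_mem : ∀ (X Y : TM), (Y : E) ∈ S → (nablaStar X Y : E) ∈ S
  /-- screen Gauss equation: `∇_X PY = ∇*_X PY + C(X,PY) ξ` -/
  screen_gauss : ∀ (X Y : TM), (Y : E) ∈ S → nabla X Y = nablaStar X Y + C X Y • xi
  /-- the ambient almost contact structure tensor `φ̄` -/
  phibar : E →ₗ[F] E
  /-- the structure vector field `ζ`, tangent to `M` and lying in the screen distribution -/
  zeta : TM
  zeta_mem : (zeta : E) ∈ S
  gbar_zeta_zeta : gbar (zeta : E) (zeta : E) = 1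
  /-- `φ̄² X = −X + η(X) ζ`, where `η(X) = ḡ(X,ζ)` -/
  phibar_sq : ∀ X : E, phibar (phibar X) = -X + gbar X (zeta : E) • (zeta : E)
  /-- `ḡ(φ̄X, φ̄Y) = ḡ(X,Y) − η(X) η(Y)` -/
  phibar_metric : ∀ X Y : E,
    gbar (phibar X) (phibar Y) = gbar X Y - gbar X (zeta : E) * gbar Y (zeta : E)
  /-- Sasakian condition: `(∇̄_X φ̄) Y = ḡ(X,Y) ζ − η(Y) X` -/
  sasaki : ∀ (X : TM) (Y : E), nablaBar X (phibar Y) - phibar (nablaBar X Y)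
    = gbar (X : E) Y • (zeta : E) - gbar Y (zeta : E) • (X : E)
  /-- `∇̄_X ζ = −φ̄ X` -/
  sasaki_zeta : ∀ X : TM, nablaBar X (zeta : E) = -(phibar (X : E))
  /-- `U = −φ̄ N`, tangent to `M` and lying in the screen distribution -/
  U : TM
  U_mem : (U : E) ∈ S
  U_spec : (U : E) = -(phibar Nt)
  /-- `V = −φ̄ ξ`, tangent to `M` and lying in the screen distribution -/
  V : TM
  V_mem : (V : E) ∈ S
  V_spec : (V : E) = -(phibar (xi : E))
  /-- the induced structure tensor `φ` on `M` -/
  phi : TM → TM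
  /-- `φ̄ X = φ X + u(X) N`, where `u(X) = g(X,V)` -/
  phi_spec : ∀ X : TM, phibar (X : E) = (phi X : E) + gbar (X : E) (V : E) • Nt

/-- There exists no lightlike hypersurface `(M,g)`, tangent to the structure vector field
`ζ`, of an indefinite Sasakian manifold `(M̄, φ̄, ζ, η, ḡ)`, whose second fundamental form
`h = B ⊗ N` is parallel, i.e. such that
`(∇_X h)(Y,Z) = ∇ᵗ_X h(Y,Z) − h(∇_X Y, Z) − h(Y, ∇_X Z) = 0` for all `X, Y, Z` tangent
to `M` (since `∇ᵗ_X N = τ(X) N`, one has `∇ᵗ_X h(Y,Z) = (X⬝B(Y,Z) + B(Y,Z) τ(X)) • N`). -/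
theorem no_lightlike_hypersurface_with_parallel_h
    (F : Type) [CommRing F] [Algebra ℝ F] [Nontrivial F]
    (E : Type) [AddCommGroup E] [Module F E]
    (H : SasakiLightlikeHypersurface F E)
    (hpar : ∀ X Y Z : H.TM,
      (H.D X (H.B Y Z) + H.B Y Z * H.tau X) • H.Nt
        - H.B (H.nabla X Y) Z • H.Nt - H.B Y (H.nabla X Z) • H.Nt = 0) :
    False := by
  -- basic pairings
  have hXξ : ∀ X : H.TM, H.gbar (X : E) (H.xi : E) = 0 := fun X => by
    rw [H.gbar_symm]; exact H.xi_normal X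
  have hNξ : H.gbar H.Nt (H.xi : E) = 1 := by rw [H.gbar_symm]; exact H.gbar_xi_Nt
  have hNζ : H.gbar H.Nt (H.zeta : E) = 0 := H.gbar_Nt_S _ H.zeta_mem
  have hNV : H.gbar H.Nt (H.V : E) = 0 := H.gbar_Nt_S _ H.V_mem
  -- B via the ambient connection
  have bform : ∀ X Y : H.TM, H.B X Y = H.gbar (H.nablaBar X (Y : E)) (H.xi : E) := by
    intro X Y
    rw [H.gauss X Y]
    simp [map_add, LinearMap.add_apply, LinearMap.smul_apply, smul_eq_mul, hXξ, hNξ]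
  -- B(X, ξ) = 0
  have Bxi : ∀ X : H.TM, H.B X H.xi = 0 := by
    intro X
    rw [bform, H.weingarten_screen X]
    simp [map_sub, map_neg, map_smul, LinearMap.sub_apply, LinearMap.neg_apply,
      LinearMap.smul_apply, smul_eq_mul, hXξ]
  -- ḡ(A*X, W) = B(X, W)
  have gAW : ∀ X W : H.TM, H.gbar (H.Astar X : E) (W : E) = H.B X W := by
    intro X W
    have hm := H.nablaBar_metric X (H.xi : E) (W : E)
    rw [H.xi_normal W, H.weingarten_screen X, H.gauss X W] at hm
    simp [map_add, map_sub, map_neg, map_smul, LinearMap.add_apply, LinearMap.sub_apply,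
      LinearMap.neg_apply, LinearMap.smul_apply, smul_eq_mul, H.xi_normal, H.gbar_xi_Nt] at hm
    linear_combination hm
  have gWA : ∀ X W : H.TM, H.gbar (W : E) (H.Astar X : E) = H.B X W := fun X W => by
    rw [H.gbar_symm]; exact gAW X W
  -- ḡ(A*X, N) = 0
  have gAN : ∀ X : H.TM, H.gbar (H.Astar X : E) H.Nt = 0 := by
    intro X
    have hm := H.nablaBar_metric X (H.xi : E) H.Nt
    rw [H.gbar_xi_Nt, H.weingarten_screen X, H.weingarten X] at hm
    simp [map_add, map_sub, map_neg, map_smul, LinearMap.add_apply, LinearMap.sub_apply,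
      LinearMap.neg_apply, LinearMap.smul_apply, smul_eq_mul, H.xi_normal, H.gbar_xi_Nt,
      Derivation.map_one_eq_zero] at hm
    linear_combination hm
  have gNA : ∀ X : H.TM, H.gbar H.Nt (H.Astar X : E) = 0 := fun X => by
    rw [H.gbar_symm]; exact gAN X
  -- B symmetric
  have Bsymm : ∀ X Y : H.TM, H.B X Y = H.B Y X := by
    intro X Y
    rw [bform X Y, bform Y X]
    have hb : H.gbar ((H.bracket X Y : E)) (H.xi : E) = 0 := hXξ _
    rw [← H.nablaBar_torsion_free X Y] at hb
    simp [map_sub, LinearMap.sub_apply] at hb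
    linear_combination hb
  -- linearity of B in the second slot
  have Badd : ∀ (X Y Z : H.TM), H.B X (Y + Z) = H.B X Y + H.B X Z := by
    intro X Y Z
    rw [bform, bform, bform, Submodule.coe_add, H.nablaBar_add']
    simp [map_add, LinearMap.add_apply]
  have Bsmul : ∀ (f : F) (X Y : H.TM), H.B X (f • Y) = f * H.B X Y := by
    intro f X Y
    rw [bform, bform, Submodule.coe_smul, H.nablaBar_leibniz]
    simp [map_add, map_smul, LinearMap.add_apply, LinearMap.smul_apply, smul_eq_mul, hXξ]
  have Bneg : ∀ (X Y : H.TM), H.B X (-Y) = -H.B X Y := by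
    intro X Y
    have h := Bsmul (-1) X Y
    simpa using h
  -- ξ = φ̄ V and η(V) = 0
  have xiphiV : H.phibar (H.V : E) = (H.xi : E) := by
    rw [H.V_spec, map_neg, H.phibar_sq, H.xi_normal H.zeta]
    simp
  have hVζ : H.gbar (H.V : E) (H.zeta : E) = 0 := by
    have h1 : H.phibar (H.phibar (H.V : E))
        = -(H.V : E) + H.gbar (H.V:E) (H.zeta:E) • (H.zeta:E) := H.phibar_sq _
    rw [xiphiV] at h1
    have h2 := congrArg (fun W => H.gbar W (H.zeta : E)) h1
    simp only [map_add, map_neg, map_smul, LinearMap.add_apply, LinearMap.neg_apply,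
      LinearMap.smul_apply, smul_eq_mul, H.gbar_zeta_zeta, mul_one] at h2
    -- h2 : gbar (φ̄ξ) ζ = -gbar V ζ + gbar V ζ
    have h3 : H.gbar (H.V:E) (H.zeta:E) = -H.gbar (H.phibar (H.xi:E)) (H.zeta:E) := by
      rw [H.V_spec]; simp
    rw [h3]
    linear_combination -h2
  -- skewness at ξ : ḡ(φ̄W, ξ) = ḡ(W, V)
  have skew : ∀ W : E, H.gbar (H.phibar W) (H.xi : E) = H.gbar W (H.V : E) := by
    intro W
    rw [← xiphiV, H.phibar_metric, hVζ]
    ring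
  -- u(U) = 1, u(V) = 0
  have uU : H.gbar (H.U : E) (H.V : E) = 1 := by
    rw [← skew, H.U_spec, map_neg, map_neg, H.phibar_sq]
    simp [map_add, map_neg, map_smul, LinearMap.add_apply, LinearMap.neg_apply,
      LinearMap.smul_apply, smul_eq_mul, hNξ, hNζ, hXξ]
  have uV : H.gbar (H.V : E) (H.V : E) = 0 := by
    rw [← skew, xiphiV]; exact H.xi_normal H.xi
  -- B(X, ζ) = -u(X)
  have Bzeta : ∀ X : H.TM, H.B X H.zeta = -H.gbar (X:E) (H.V:E) := by
    intro X
    rw [bform, H.sasaki_zeta X, map_neg, LinearMap.neg_apply, skew]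
  -- ∇_X ξ = -A*X - τ(X) ξ
  have nablaXiTM : ∀ X : H.TM, H.nabla X H.xi = -(H.Astar X) - H.tau X • H.xi := by
    intro X
    apply Subtype.ext
    have h := H.gauss X H.xi
    rw [Bxi X, H.weingarten_screen X] at h
    simpa using h.symm
  -- ∇_X ζ = -φX
  have nablaZeta : ∀ X : H.TM, H.nabla X H.zeta = -(H.phi X) := by
    intro X
    apply Subtype.ext
    have h := H.gauss X H.zeta
    rw [H.sasaki_zeta X, H.phi_spec X, Bzeta X, neg_add, neg_smul] at h
    have h2 := (add_right_cancel h).symm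
    simpa using h2
  -- scalar form of the parallelism hypothesis
  have spar : ∀ X Y Z : H.TM, H.D X (H.B Y Z) + H.B Y Z * H.tau X
      - H.B (H.nabla X Y) Z - H.B Y (H.nabla X Z) = 0 := by
    intro X Y Z
    have h := congrArg (fun W => H.gbar (H.xi : E) W) (hpar X Y Z)
    simp only [map_add, map_sub, map_smul, LinearMap.add_apply, LinearMap.sub_apply,
      LinearMap.smul_apply, smul_eq_mul, H.gbar_xi_Nt, mul_one, map_zero] at h
    linear_combination h
  -- parallelism consequence: B(Y, A*X) = 0
  have P1 : ∀ X Y : H.TM, H.B Y (H.Astar X) = 0 := by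
    intro X Y
    have h := spar X Y H.xi
    rw [Bxi Y, Bxi (H.nabla X Y), nablaXiTM X] at h
    rw [sub_eq_add_neg (-(H.Astar X))] at h
    rw [Badd, Bneg, Bneg, Bsmul, Bxi Y] at h
    simpa using h
  -- φ̄ U = N, φ U = 0
  have phibarU : H.phibar (H.U : E) = H.Nt := by
    rw [H.U_spec, map_neg, H.phibar_sq, hNζ]
    simp
  have phiU : H.phi H.U = 0 := by
    have h := H.phi_spec H.U
    rw [phibarU, uU, one_smul] at h
    have h2 : (H.phi H.U : E) = 0 := (right_eq_add.mp h)
    exact Subtype.ext (by simpa using h2)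
  -- φ V = ξ
  have phiV : H.phi H.V = H.xi := by
    have h := H.phi_spec H.V
    rw [xiphiV, uV, zero_smul, add_zero] at h
    exact Subtype.ext h.symm
  -- u(φW) = 0
  have uphi : ∀ W : H.TM, H.gbar (H.phi W : E) (H.V : E) = 0 := by
    intro W
    have h2 := H.phibar_metric (H.phibar (W:E)) (H.V:E)
    rw [xiphiV, H.phibar_sq, hVζ, mul_zero, sub_zero] at h2
    simp only [map_add, map_neg, map_smul, LinearMap.add_apply, LinearMap.neg_apply,
      LinearMap.smul_apply, smul_eq_mul, hXξ, mul_zero, add_zero, neg_zero, zero_add] at h2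
    -- h2 : 0 = gbar (φ̄ W) V
    have h3 := congrArg (fun Z => H.gbar Z (H.V:E)) (H.phi_spec W)
    simp only [map_add, map_smul, LinearMap.add_apply, LinearMap.smul_apply,
      smul_eq_mul, hNV, mul_zero, add_zero] at h3
    -- h3 : gbar (φ̄ W) V = gbar (φW) V
    linear_combination -h2 - h3
  -- φ²W = -W + η(W) ζ + u(W) U
  have phisq : ∀ W : H.TM, H.phi (H.phi W)
      = -W + H.gbar (W:E) (H.zeta:E) • H.zeta + H.gbar (W:E) (H.V:E) • H.U := by
    intro W
    apply Subtype.ext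
    have h1 : H.phibar (H.phibar (W:E))
        = -(W:E) + H.gbar (W:E) (H.zeta:E) • (H.zeta:E) := H.phibar_sq _
    nth_rewrite 1 [H.phi_spec W] at h1
    rw [map_add, map_smul, H.phi_spec (H.phi W), uphi W, zero_smul, add_zero] at h1
    have hphibarNt : H.phibar H.Nt = -(H.U : E) := by
      rw [H.U_spec]; simp
    rw [hphibarNt] at h1
    -- h1 : ↑(φφW) + u(W) • (-U) = -W + η(W) • ζ
    have : ((-W + H.gbar (W:E) (H.zeta:E) • H.zeta + H.gbar (W:E) (H.V:E) • H.U : H.TM) : E)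
        = -(W:E) + H.gbar (W:E) (H.zeta:E) • (H.zeta:E) + H.gbar (W:E) (H.V:E) • (H.U:E) := by
      simp
    rw [this]
    linear_combination (norm := module) h1
  -- general identity for X⬝u(Y)
  have F4 : ∀ X Y : H.TM, H.D X (H.gbar (Y:E) (H.V:E))
      = H.gbar (H.nabla X Y : E) (H.V:E) - H.B X (H.phi Y)
        - H.tau X * H.gbar (Y:E) (H.V:E) := by
    intro X Y
    have hm := H.nablaBar_metric X (H.phibar (Y:E)) (H.xi:E)
    have hs' : H.nablaBar X (H.phibar (Y:E))
        = H.phibar (H.nablaBar X (Y:E)) + H.gbar (X:E) (Y:E) • (H.zeta:E)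
          - H.gbar (Y:E) (H.zeta:E) • (X:E) := by
      linear_combination (norm := module) H.sasaki X (Y:E)
    rw [hs', H.weingarten_screen X, H.gauss X Y, H.phi_spec Y] at hm
    simp only [map_add, map_sub, map_neg, map_smul, LinearMap.add_apply, LinearMap.sub_apply,
      LinearMap.neg_apply, LinearMap.smul_apply, smul_eq_mul, skew, hXξ, hNξ, hNV,
      gWA, gNA, mul_one, mul_zero, add_zero, zero_add, sub_zero, zero_mul,
      zero_sub, neg_zero] at hm
    linear_combination hm
  -- parallelism consequence: B(X, φY) + B(Y, φX) = 0
  have VI : ∀ X Y : H.TM, H.B X (H.phi Y) + H.B Y (H.phi X) = 0 := by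
    intro X Y
    have h := spar X Y H.zeta
    rw [Bzeta Y, Bzeta (H.nabla X Y), nablaZeta X, Bneg] at h
    simp only [map_neg] at h
    rw [F4 X Y] at h
    linear_combination h
  have BUphi : ∀ Y : H.TM, H.B H.U (H.phi Y) = 0 := by
    intro Y
    have h := VI H.U Y
    rw [phiU] at h
    have hB0 : H.B Y 0 = 0 := by simpa using Bsmul 0 Y 0
    rw [hB0, add_zero] at h
    exact h
  have BVphi : ∀ Y : H.TM, H.B H.V (H.phi Y) = 0 := by
    intro Y
    have h := VI H.V Y
    rw [phiV, Bxi Y, add_zero] at h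
    exact h
  -- B(U, W) = -η(W) + u(W) B(U,U)
  have BUW : ∀ W : H.TM, H.B H.U W
      = -H.gbar (W:E) (H.zeta:E) + H.gbar (W:E) (H.V:E) * H.B H.U H.U := by
    intro W
    have h := BUphi (H.phi W)
    rw [phisq W] at h
    simp only [Badd, Bneg, Bsmul] at h
    rw [Bzeta H.U, uU] at h
    linear_combination -h
  have BUV : H.B H.U H.V = 0 := by
    have h := BUW H.V
    rw [hVζ, uV] at h
    simpa using h
  -- B(V, ·) = 0
  have BVW : ∀ W : H.TM, H.B H.V W = 0 := by
    intro W
    have h := BVphi (H.phi W)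
    rw [phisq W] at h
    simp only [Badd, Bneg, Bsmul] at h
    rw [Bzeta H.V, uV, Bsymm H.V H.U, BUV] at h
    linear_combination -h
  -- conclusion : u ≡ 0, contradicting u(U) = 1
  have key : ∀ X : H.TM, H.gbar (X:E) (H.V:E) = 0 := by
    intro X
    have h := BUW (H.Astar X)
    rw [P1 X H.U, gAW X H.zeta, gAW X H.V, Bzeta X, Bsymm X H.V, BVW X] at h
    linear_combination -h
  have h1 := key H.U
  rw [uU] at h1
  exact one_ne_zero h1
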